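/- Let (X,d) be a metric space, x₀ ∈ X, R > 0, and let C be a compact connected subset of X. Suppose ζ₀ ∈ C with d(ζ₀,x₀) < R, and suppose C contains a point outside the closed ball cl(B(x₀,R)). Then the connected component of ζ₀ in C ∩ cl(B(x₀,R)) contains a point z₁ with d(z₁,x₀) = R. -/

import Mathlib

/-- Let `(X,d)` be a metric space, `x₀ ∈ X`, `R > 0`, and let `C` be a
compact connected subset of `X`.  Suppose `ζ₀ ∈ C` with `d(ζ₀,x₀) < R`, and `C` contains
a point outside `cl(B(x₀,R))`.  Then the connected component of `ζ₀` in
`C ∩ cl(B(x₀,R))` contains a point `z₁` with `d(z₁,x₀) = R`. -/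
theorem statement9 {X : Type*} [MetricSpace X] (x₀ : X) (R : ℝ) (hR : 0 < R)
    (C : Set X) (hCcomp : IsCompact C) (hCconn : IsPreconnected C)
    (ζ₀ : X) (hζ₀ : ζ₀ ∈ C) (hζ₀R : dist ζ₀ x₀ < R)
    (hout : ∃ w ∈ C, w ∉ closure (Metric.ball x₀ R)) :
    ∃ z₁ ∈ connectedComponentIn (C ∩ closure (Metric.ball x₀ R)) ζ₀,
      dist z₁ x₀ = R := by
  classical
  set K : Set X := C ∩ closure (Metric.ball x₀ R) with hKdef
  have hζ₀ball : ζ₀ ∈ Metric.ball x₀ R := hζ₀R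
  have hζ₀K : ζ₀ ∈ K := ⟨hζ₀, subset_closure hζ₀ball⟩
  by_contra hcon
  push_neg at hcon
  -- work in the compact subtype K
  have hKcomp : IsCompact K :=
    hCcomp.inter_right isClosed_closure
  haveI : CompactSpace K := isCompact_iff_compactSpace.1 hKcomp
  set x : K := ⟨ζ₀, hζ₀K⟩ with hxdef
  -- the sphere inside K, as a closed set
  set F : Set K := {z : K | dist (z : X) x₀ = R} with hFdef
  have hFclosed : IsClosed F :=
    isClosed_eq (Continuous.dist continuous_subtype_val continuous_const) continuous_const
  -- the connected component of x in K avoids F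
  have hcomp_sub : connectedComponent x ⊆ Fᶜ := by
    intro y hy hyF
    have hyin : (y : X) ∈ connectedComponentIn K ζ₀ := by
      rw [connectedComponentIn_eq_image hζ₀K]
      exact ⟨y, hy, rfl⟩
    exact hcon _ hyin hyF
  -- find a clopen set V in K containing x and avoiding F
  obtain ⟨⟨V, hVclopen, hxV⟩, hVsub⟩ :
      ∃ s : {s : Set K // IsClopen s ∧ x ∈ s}, (s : Set K) ⊆ Fᶜ := by
    have hiInter : (⋂ s : {s : Set K // IsClopen s ∧ x ∈ s}, (s : Set K)) = connectedComponent x :=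
      (connectedComponent_eq_iInter_isClopen x).symm
    haveI : Nonempty {s : Set K // IsClopen s ∧ x ∈ s} :=
      ⟨⟨Set.univ, isClopen_univ, Set.mem_univ x⟩⟩
    have hNcl : ∀ s : {s : Set K // IsClopen s ∧ x ∈ s}, IsClosed (s : Set K) :=
      fun s => s.property.1.1
    have hdir : Directed (· ⊇ ·) fun s : {s : Set K // IsClopen s ∧ x ∈ s} => (s : Set K) := by
      rintro ⟨s, hs, hxs⟩ ⟨t, ht, hxt⟩
      exact ⟨⟨s ∩ t, hs.inter ht, ⟨hxs, hxt⟩⟩, Set.inter_subset_left, Set.inter_subset_right⟩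
    have h_nhd : ∀ y ∈ ⋂ s : {s : Set K // IsClopen s ∧ x ∈ s}, (s : Set K), Fᶜ ∈ nhds y := by
      intro y hy
      rw [hiInter] at hy
      exact hFclosed.isOpen_compl.mem_nhds (hcomp_sub hy)
    exact exists_subset_nhds_of_compactSpace hdir hNcl h_nhd
  -- V is the preimage of some open W of X
  obtain ⟨W, hWopen, hWV⟩ : ∃ W : Set X, IsOpen W ∧ Subtype.val ⁻¹' W = V :=
    isOpen_induced_iff.1 hVclopen.2
  -- U := image of V; it is compact hence closed in X
  set U : Set X := Subtype.val '' V with hUdef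
  have hUcompact : IsCompact U :=
    (hVclopen.1.isCompact).image continuous_subtype_val
  have hUclosed : IsClosed U := hUcompact.isClosed
  -- key identity: U = C ∩ (W ∩ ball x₀ R)
  have hUeq : U = C ∩ (W ∩ Metric.ball x₀ R) := by
    ext u
    constructor
    · rintro ⟨v, hvV, rfl⟩
      have hvK : (v : X) ∈ K := v.2
      refine ⟨hvK.1, ?_, ?_⟩
      · have : v ∈ Subtype.val ⁻¹' W := by rw [hWV]; exact hvV
        exact this
      · have hle : dist (v : X) x₀ ≤ R := by
          have := Metric.closure_ball_subset_closedBall hvK.2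
          simpa [Metric.mem_closedBall] using this
        have hne : dist (v : X) x₀ ≠ R := hVsub hvV
        exact lt_of_le_of_ne hle hne
    · rintro ⟨hc, hcW, hcball⟩
      have hcK : u ∈ K := ⟨hc, subset_closure hcball⟩
      refine ⟨⟨u, hcK⟩, ?_, rfl⟩
      rw [← hWV]; exact hcW
  -- now contradict connectedness of C
  haveI : PreconnectedSpace C := Subtype.preconnectedSpace hCconn
  set S : Set C := Subtype.val ⁻¹' (W ∩ Metric.ball x₀ R) with hSdef
  have hSopen : IsOpen S :=
    (hWopen.inter Metric.isOpen_ball).preimage continuous_subtype_val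
  have hSclosed : IsClosed S := by
    have : S = Subtype.val ⁻¹' U := by
      ext c
      simp only [hSdef, Set.mem_preimage, hUeq, Set.mem_inter_iff]
      exact ⟨fun h => ⟨c.2, h⟩, fun h => h.2⟩
    rw [this]
    exact hUclosed.preimage continuous_subtype_val
  rcases isClopen_iff.1 ⟨hSclosed, hSopen⟩ with hS | hS
  · -- S is empty, but ζ₀ ∈ S
    have hζ₀W : ζ₀ ∈ W := by
      have : x ∈ Subtype.val ⁻¹' W := by rw [hWV]; exact hxV
      exact this
    have : (⟨ζ₀, hζ₀⟩ : C) ∈ S := ⟨hζ₀W, hζ₀ball⟩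
    rw [hS] at this
    exact this
  · -- S is everything, but w ∉ S
    obtain ⟨w, hwC, hwout⟩ := hout
    have : (⟨w, hwC⟩ : C) ∈ S := hS ▸ Set.mem_univ _
    exact hwout (subset_closure this.2)
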